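/- For any string T of length n over a finite alphabet and any k ≤ n, the k-th order empirical entropy satisfies H_k(TT) ≥ H_k(T), where TT denotes the concatenation of T with itself. -/

import Mathlib

variable {α : Type*} [Fintype α] [DecidableEq α]

/-- Zeroth-order empirical entropy of a string. -/
noncomputable def H0 (S : List α) : ℝ :=
  -∑ c : α, ((S.count c : ℝ) / S.length) * Real.logb 2 ((S.count c : ℝ) / S.length)

/-- `follow S W` is the string `S^W` of characters immediately following
occurrences of the context `W` in `S`. -/
def follow (S W : List α) : List α :=
  (List.range S.length).filterMap (fun i =>
    if W <+: S.drop i then (S.drop (i + W.length)).head? else none)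

/-- `k`-th order empirical entropy. -/
noncomputable def Hk (k : ℕ) (S : List α) : ℝ :=
  ∑ W : Fin k → α,
    ((follow S (List.ofFn W)).length : ℝ) / S.length * H0 (follow S (List.ofFn W))


/-- Two-term log-sum inequality. -/
lemma logsum (a b c d : ℝ) (ha : 0 ≤ a) (hb : 0 < b) (hc : 0 ≤ c) (hd : 0 < d) :
    (a + c) * Real.log ((a + c) / (b + d)) ≤ a * Real.log (a / b) + c * Real.log (c / d) := by
  rcases ha.eq_or_lt with rfl | ha
  · simp only [zero_add, zero_mul]
    rcases hc.eq_or_lt with rfl | hc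
    · simp
    · have h1 : c / (b + d) ≤ c / d := by
        apply div_le_div_of_nonneg_left hc.le hd; linarith
      have := Real.log_le_log (by positivity) h1
      nlinarith
  rcases hc.eq_or_lt with rfl | hc
  · simp only [add_zero, zero_mul]
    have h1 : a / (b + d) ≤ a / b := by
      apply div_le_div_of_nonneg_left ha.le hb; linarith
    have := Real.log_le_log (by positivity) h1
    nlinarith
  · set A := a + c with hA
    set B := b + d with hB
    have hApos : 0 < A := by positivity
    have hBpos : 0 < B := by positivity
    have k1 : Real.log (A / B * (b / a)) ≤ A / B * (b / a) - 1 :=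
      Real.log_le_sub_one_of_pos (by positivity)
    have k2 : Real.log (A / B * (d / c)) ≤ A / B * (d / c) - 1 :=
      Real.log_le_sub_one_of_pos (by positivity)
    have e1 : Real.log (A / B * (b / a)) = Real.log (A / B) - Real.log (a / b) := by
      rw [Real.log_mul (div_pos hApos hBpos).ne' (div_pos hb ha).ne',
        Real.log_div hb.ne' ha.ne', Real.log_div ha.ne' hb.ne']
      ring
    have e2 : Real.log (A / B * (d / c)) = Real.log (A / B) - Real.log (c / d) := by
      rw [Real.log_mul (div_pos hApos hBpos).ne' (div_pos hd hc).ne',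
        Real.log_div hd.ne' hc.ne', Real.log_div hc.ne' hd.ne']
      ring
    rw [e1] at k1; rw [e2] at k2
    have q1 : a * (Real.log (A/B) - Real.log (a/b)) ≤ A * b / B - a := by
      have := mul_le_mul_of_nonneg_left k1 ha.le
      calc a * (Real.log (A/B) - Real.log (a/b)) ≤ a * (A / B * (b / a) - 1) := this
        _ = A * b / B - a := by field_simp
    have q2 : c * (Real.log (A/B) - Real.log (c/d)) ≤ A * d / B - c := by
      have := mul_le_mul_of_nonneg_left k2 hc.le
      calc c * (Real.log (A/B) - Real.log (c/d)) ≤ c * (A / B * (d / c) - 1) := this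
        _ = A * d / B - c := by field_simp
    have hfin : A * b / B + A * d / B = A := by field_simp [hB]; ring
    nlinarith [q1, q2]

lemma logsumb (a b c d : ℝ) (ha : 0 ≤ a) (hb : 0 < b) (hc : 0 ≤ c) (hd : 0 < d) :
    (a + c) * Real.logb 2 ((a + c) / (b + d)) ≤ a * Real.logb 2 (a / b) + c * Real.logb 2 (c / d) := by
  have h2 : (0:ℝ) < Real.log 2 := Real.log_pos (by norm_num)
  simp only [Real.logb, mul_div_assoc', ← add_div]
  exact div_le_div_of_nonneg_right (logsum a b c d ha hb hc hd) h2.le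

lemma entterm_nonpos (x L : ℝ) (hx : 0 ≤ x) (hxL : x ≤ L) :
    x * Real.logb 2 (x / L) ≤ 0 := by
  rcases hx.eq_or_lt with rfl | hx
  · simp
  · have hL : 0 < L := lt_of_lt_of_le hx hxL
    apply mul_nonpos_of_nonneg_of_nonpos hx.le
    exact Real.logb_nonpos (by norm_num) (by positivity) (by
      rw [div_le_one hL]; exact hxL)

lemma core (n N : α → ℝ) (h0 : ∀ c, 0 ≤ n c) (h2 : ∀ c, 2 * n c ≤ N c) :
    ∑ c, N c * Real.logb 2 (N c / ∑ c, N c) ≤ 2 * ∑ c, n c * Real.logb 2 (n c / ∑ c, n c) := by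
  set m := ∑ c, n c with hm
  set L := ∑ c, N c with hL
  have hN0 : ∀ c, 0 ≤ N c := fun c => le_trans (by linarith [h0 c]) (h2 c)
  have hNle : ∀ c, N c ≤ L := fun c =>
    Finset.single_le_sum (fun c _ => hN0 c) (Finset.mem_univ c)
  have hnle : ∀ c, n c ≤ m := fun c =>
    Finset.single_le_sum (fun c _ => h0 c) (Finset.mem_univ c)
  have h2mL : 2 * m ≤ L := by
    rw [hm, hL, Finset.mul_sum]; exact Finset.sum_le_sum fun c _ => h2 c
  by_cases hm0 : m = 0
  · have hzero : ∀ c, n c = 0 := fun c =>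
      le_antisymm (by linarith [hnle c]) (h0 c)
    have : ∀ c ∈ Finset.univ, n c * Real.logb 2 (n c / m) = 0 := by
      intro c _; rw [hzero c]; ring
    rw [Finset.sum_congr rfl this]
    simp only [Finset.sum_const_zero, mul_zero]
    exact Finset.sum_nonpos fun c _ => entterm_nonpos (N c) L (hN0 c) (hNle c)
  · have hmpos : 0 < m := lt_of_le_of_ne (Finset.sum_nonneg fun c _ => h0 c) (Ne.symm hm0)
    by_cases hbz : L = 2 * m
    · apply le_of_eq
      have heq : ∀ c, N c = 2 * n c := by
        intro c
        by_contra hne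
        have hlt : 2 * n c < N c := lt_of_le_of_ne (h2 c) (Ne.symm hne)
        have : 2 * m < L := by
          rw [hm, hL, Finset.mul_sum]
          exact Finset.sum_lt_sum (fun c _ => h2 c) ⟨c, Finset.mem_univ c, hlt⟩
        linarith [hbz]
      rw [Finset.mul_sum]
      apply Finset.sum_congr rfl
      intro c _
      rw [heq c, hbz, mul_div_mul_left (n c) m (by norm_num : (2:ℝ) ≠ 0)]
      ring
    · have hbpos : 0 < L - 2 * m := lt_of_le_of_ne (by linarith) (by intro h; exact hbz (by linarith))
      have key : ∀ c, N c * Real.logb 2 (N c / L) ≤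
          2 * n c * Real.logb 2 (n c / m)
            + (N c - 2 * n c) * Real.logb 2 ((N c - 2 * n c) / (L - 2 * m)) := by
        intro c
        have := logsumb (2 * n c) (2 * m) (N c - 2 * n c) (L - 2 * m)
          (by linarith [h0 c]) (by linarith) (by linarith [h2 c]) hbpos
        rw [show 2 * n c + (N c - 2 * n c) = N c by ring,
          show 2 * m + (L - 2 * m) = L by ring,
          mul_div_mul_left (n c) m (by norm_num : (2:ℝ) ≠ 0)] at this
        exact this
      calc ∑ c, N c * Real.logb 2 (N c / L)
          ≤ ∑ c, (2 * n c * Real.logb 2 (n c / m)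
            + (N c - 2 * n c) * Real.logb 2 ((N c - 2 * n c) / (L - 2 * m))) :=
            Finset.sum_le_sum fun c _ => key c
        _ = 2 * (∑ c, n c * Real.logb 2 (n c / m))
            + ∑ c, (N c - 2 * n c) * Real.logb 2 ((N c - 2 * n c) / (L - 2 * m)) := by
            rw [Finset.sum_add_distrib]
            congr 1
            rw [Finset.mul_sum]
            exact Finset.sum_congr rfl fun c _ => by ring
        _ ≤ 2 * (∑ c, n c * Real.logb 2 (n c / m)) + 0 := by
            gcongr
            apply Finset.sum_nonpos
            intro c _
            apply entterm_nonpos _ _ (by linarith [h2 c])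
            have : ∑ c, (N c - 2 * n c) = L - 2 * m := by
              rw [Finset.sum_sub_distrib, ← Finset.mul_sum, hm, hL]
            calc N c - 2 * n c ≤ ∑ c, (N c - 2 * n c) :=
                Finset.single_le_sum (f := fun c => N c - 2 * n c)
                  (fun c _ => by linarith [h2 c]) (Finset.mem_univ c)
              _ = L - 2 * m := this
        _ = 2 * ∑ c, n c * Real.logb 2 (n c / m) := by ring

lemma filterMap_sublist_filterMap {β γ : Type*} (f g : β → Option γ) (l : List β)
    (h : ∀ a ∈ l, ∀ b, f a = some b → g a = some b) :
    (l.filterMap f).Sublist (l.filterMap g) := by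
  induction l with
  | nil => simp
  | cons a l ih =>
    rw [List.filterMap_cons, List.filterMap_cons]
    have ih' := ih fun a ha b hb => h a (List.mem_cons_of_mem _ ha) b hb
    cases hfa : f a with
    | none =>
      cases g a with
      | none => exact ih'
      | some c => exact ih'.cons c
    | some c =>
      rw [h a List.mem_cons_self c hfa]
      exact ih'.cons₂ c

lemma follow_append_self (T W : List α) :
    ∃ A : List α, follow (T ++ T) W = A ++ follow T W ∧ (follow T W).Sublist A := by
  refine ⟨(List.range T.length).filterMap (fun i =>
    if W <+: (T ++ T).drop i then ((T ++ T).drop (i + W.length)).head? else none), ?_, ?_⟩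
  · unfold follow
    rw [List.length_append, List.range_add, List.filterMap_append, List.filterMap_map]
    congr 1
    apply List.filterMap_congr
    intro i _
    simp only [Function.comp_apply]
    rw [List.drop_length_add_append, show T.length + i + W.length = T.length + (i + W.length) by ring,
      List.drop_length_add_append]
  · apply filterMap_sublist_filterMap
    intro i _ c hc
    by_cases hp : W <+: T.drop i
    · rw [if_pos hp] at hc
      have hlt : i + W.length < T.length := by
        by_contra hcon
        push_neg at hcon
        rw [List.drop_eq_nil_of_le hcon] at hc
        simp at hc
      have hdrop : (T ++ T).drop i = T.drop i ++ T := by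
        rw [List.drop_append,
          Nat.sub_eq_zero_of_le (le_of_lt (lt_of_le_of_lt (Nat.le_add_right i W.length) hlt)),
          List.drop_zero]
      have hp2 : W <+: (T ++ T).drop i := by
        rw [hdrop]; exact hp.trans (List.prefix_append _ _)
      rw [if_pos hp2, List.drop_append, Nat.sub_eq_zero_of_le hlt.le,
        List.drop_zero, List.head?_append, hc]
      rfl
    · rw [if_neg hp] at hc
      simp at hc

lemma sum_count_eq_length (S : List α) : ∑ c : α, S.count c = S.length := by
  induction S with
  | nil => simp
  | cons a S ih =>
    simp only [List.count_cons, List.length_cons, Finset.sum_add_distrib, ih, beq_iff_eq]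
    congr 1
    simp [Finset.sum_ite_eq]

lemma len_mul_H0 (S : List α) :
    (S.length : ℝ) * H0 S = -∑ c : α, (S.count c : ℝ) * Real.logb 2 ((S.count c : ℝ) / S.length) := by
  rcases eq_or_ne S.length 0 with h | h
  · have : S = [] := List.length_eq_zero_iff.mp h
    subst this
    simp [H0]
  · have hne : (S.length : ℝ) ≠ 0 := Nat.cast_ne_zero.mpr h
    unfold H0
    rw [mul_neg, Finset.mul_sum]
    congr 1
    apply Finset.sum_congr rfl
    intro c _
    rw [show (S.length : ℝ) * ((S.count c : ℝ) / S.length * Real.logb 2 ((S.count c : ℝ) / S.length))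
      = ((S.count c : ℝ) / S.length * S.length) * Real.logb 2 ((S.count c : ℝ) / S.length) by ring,
      div_mul_cancel₀ _ hne]

lemma step (T W : List α) :
    ((follow T W).length : ℝ) / T.length * H0 (follow T W) ≤
      ((follow (T ++ T) W).length : ℝ) / (T ++ T).length * H0 (follow (T ++ T) W) := by
  obtain ⟨A, hEq, hSub⟩ := follow_append_self T W
  rcases eq_or_ne T.length 0 with h0 | h0
  · have hT : T = [] := List.length_eq_zero_iff.mp h0
    subst hT
    simp [follow, H0]
  · have hn : (0 : ℝ) < T.length := by positivity
    set F := follow T W with hF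
    set FF := follow (T ++ T) W with hFF
    have hcount : ∀ c, 2 * F.count c ≤ FF.count c := by
      intro c
      rw [hEq, List.count_append]
      have := hSub.count_le c
      omega
    have hcore := core (fun c => (F.count c : ℝ)) (fun c => (FF.count c : ℝ))
      (fun c => by positivity) (fun c => by exact_mod_cast hcount c)
    have hsF : ∑ c : α, ((F.count c : ℝ)) = (F.length : ℝ) := by
      exact_mod_cast congrArg (Nat.cast : ℕ → ℝ) (sum_count_eq_length F)
    have hsFF : ∑ c : α, ((FF.count c : ℝ)) = (FF.length : ℝ) := by
      exact_mod_cast congrArg (Nat.cast : ℕ → ℝ) (sum_count_eq_length FF)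
    rw [hsF, hsFF] at hcore
    have hEF := len_mul_H0 F
    have hEFF := len_mul_H0 FF
    have hmain : 2 * ((F.length : ℝ) * H0 F) ≤ (FF.length : ℝ) * H0 FF := by
      rw [hEF, hEFF]
      linarith [hcore]
    have hlen2 : ((T ++ T).length : ℝ) = 2 * T.length := by
      push_cast [List.length_append]; ring
    rw [hlen2]
    calc ((F.length : ℝ)) / T.length * H0 F
        = 2 * ((F.length : ℝ) * H0 F) / (2 * T.length) := by
          rw [div_mul_eq_mul_div, div_eq_div_iff (by positivity) (by positivity)]
          ring
      _ ≤ ((FF.length : ℝ) * H0 FF) / (2 * T.length) :=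
          div_le_div_of_nonneg_right hmain (by positivity)
      _ = ((FF.length : ℝ)) / (2 * T.length) * H0 FF := by ring


/-- For any string `T` and any `k ≤ |T|`, `H_k(TT) ≥ H_k(T)`. -/
theorem Hk_square_ge (T : List α) (k : ℕ) (hk : k ≤ T.length) :
    Hk k T ≤ Hk k (T ++ T) := by
  unfold Hk
  exact Finset.sum_le_sum fun W _ => step T (List.ofFn W)
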